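/- arXiv:2504.16296 — 4 statements merged into one kernel-verified Lean document; each statement's English description precedes it below -/
import Mathlib

section
/- Let k, n be positive integers and c ≥ 1 a real number. Consider the planar system ẋ = y, ẏ = (x^k − c)·y + x·(x^n − 1). Then the system has no closed orbits: every periodic solution (x(s), y(s)) : ℝ → ℝ² of this system is constant. -/
open Set Filter MeasureTheory intervalIntegral

/-- At a global maximum of `x` (where `x' = y`), any derivative of `y` is nonpositive. -/
private lemma snd_deriv_nonpos_at_max {x y : ℝ → ℝ} {d s₀ : ℝ}
    (hx : ∀ s, HasDerivAt x (y s) s) (hyc : Continuous y)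
    (hyd : HasDerivAt y d s₀) (hmax : ∀ s, x s ≤ x s₀) : d ≤ 0 := by
  have hlm : IsLocalMax x s₀ := Filter.Eventually.of_forall fun s => hmax s
  have hy0 : y s₀ = 0 := hlm.hasDerivAt_eq_zero (hx s₀)
  by_contra hd
  push_neg at hd
  have ht : Filter.Tendsto (slope y s₀) (nhdsWithin s₀ (Set.Iio s₀)) (nhds d) :=
    (hasDerivAt_iff_tendsto_slope.mp hyd).mono_left
      (nhdsWithin_mono s₀ (fun u hu => Set.mem_compl_singleton_iff.mpr (ne_of_lt hu)))
  have hev : ∀ᶠ u in nhdsWithin s₀ (Set.Iio s₀), 0 < slope y s₀ u := ht.eventually_const_lt hd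
  obtain ⟨a, ha, hsub⟩ := mem_nhdsLT_iff_exists_Ioo_subset.mp hev
  have ham : a < (a + s₀)/2 := by
    have : a < s₀ := ha
    linarith
  have hms : (a + s₀)/2 < s₀ := by
    have : a < s₀ := ha
    linarith
  have hyneg : ∀ u ∈ Set.Ioo ((a + s₀)/2) s₀, 0 < -(y u) := by
    intro u hu
    have h1 : 0 < slope y s₀ u := hsub ⟨lt_trans ham hu.1, hu.2⟩
    rw [slope_def_field] at h1
    have h2 : u - s₀ < 0 := by linarith [hu.2]
    rw [hy0] at h1
    have h3 : y u - 0 < 0 := by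
      by_contra h4
      push_neg at h4
      have := div_nonpos_of_nonneg_of_nonpos h4 (le_of_lt h2)
      linarith
    linarith
  have hint : ∫ u in ((a + s₀)/2)..s₀, y u = x s₀ - x ((a + s₀)/2) :=
    intervalIntegral.integral_eq_sub_of_hasDerivAt (fun t _ => hx t)
      (hyc.intervalIntegrable _ _)
  have hpos : 0 < ∫ u in ((a + s₀)/2)..s₀, -(y u) :=
    intervalIntegral.intervalIntegral_pos_of_pos_on
      (hyc.neg.intervalIntegrable _ _) hyneg hms
  rw [intervalIntegral.integral_neg, hint] at hpos
  have := hmax ((a + s₀)/2)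
  linarith

/-- At a global minimum of `x` (where `x' = y`), any derivative of `y` is nonnegative. -/
private lemma snd_deriv_nonneg_at_min {x y : ℝ → ℝ} {d s₀ : ℝ}
    (hx : ∀ s, HasDerivAt x (y s) s) (hyc : Continuous y)
    (hyd : HasDerivAt y d s₀) (hmin : ∀ s, x s₀ ≤ x s) : 0 ≤ d := by
  have h := snd_deriv_nonpos_at_max (x := fun s => -(x s)) (y := fun s => -(y s))
    (fun s => (hx s).neg) hyc.neg hyd.neg (fun s => neg_le_neg (hmin s))
  linarith

/-- A nonnegative continuous periodic function with zero integral over one period vanishes. -/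
private lemma periodic_nonneg_integral_zero {h : ℝ → ℝ} {T : ℝ} (hT : 0 < T)
    (hc : Continuous h) (hnn : ∀ s, 0 ≤ h s) (hper : Function.Periodic h T)
    (hzero : ∫ s in (0:ℝ)..T, h s = 0) : ∀ s, h s = 0 := by
  intro s₀
  obtain ⟨t, ht, hst⟩ := hper.exists_mem_Ico₀ hT s₀
  rw [hst]
  by_contra hne
  have hpos : 0 < h t := lt_of_le_of_ne (hnn t) (Ne.symm hne)
  have hev : ∀ᶠ u in nhds t, h t / 2 < h u :=
    (hc.continuousAt).eventually_const_lt (by linarith)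
  obtain ⟨δ, hδ, hball⟩ := Metric.eventually_nhds_iff.mp hev
  set δ' := min (δ/2) ((T - t)/2) with hδ'
  have hTt : 0 < T - t := by linarith [ht.2]
  have hδ'pos : 0 < δ' := lt_min (by linarith) (by linarith)
  have hsubT : t + δ' ≤ T := by
    have := min_le_right (δ/2) ((T - t)/2)
    have : δ' ≤ (T - t)/2 := this
    linarith
  have h1 : 0 < ∫ u in t..(t + δ'), h u := by
    apply intervalIntegral.intervalIntegral_pos_of_pos_on (hc.intervalIntegrable _ _)
      _ (by linarith)
    intro u hu
    have hd : dist u t < δ := by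
      rw [Real.dist_eq, abs_of_pos (by linarith [hu.1])]
      have := min_le_left (δ/2) ((T - t)/2)
      have h2 : δ' ≤ δ/2 := this
      have := hu.2
      linarith
    have := hball hd
    linarith
  have h2 : 0 ≤ ∫ u in (0:ℝ)..t, h u :=
    intervalIntegral.integral_nonneg ht.1 (fun u _ => hnn u)
  have h3 : 0 ≤ ∫ u in (t + δ')..T, h u :=
    intervalIntegral.integral_nonneg hsubT (fun u _ => hnn u)
  have hadd1 : (∫ u in (0:ℝ)..t, h u) + (∫ u in t..(t+δ'), h u) = ∫ u in (0:ℝ)..(t+δ'), h u :=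
    intervalIntegral.integral_add_adjacent_intervals (hc.intervalIntegrable _ _)
      (hc.intervalIntegrable _ _)
  have hadd2 : (∫ u in (0:ℝ)..(t+δ'), h u) + (∫ u in (t+δ')..T, h u) = ∫ u in (0:ℝ)..T, h u :=
    intervalIntegral.integral_add_adjacent_intervals (hc.intervalIntegrable _ _)
      (hc.intervalIntegrable _ _)
  rw [hzero] at hadd2
  linarith

/-- For `c ≥ 1`, the planar system `ẋ = y`, `ẏ = (x^k − c)·y + x·(x^n − 1)` has no
closed orbits: every periodic solution is constant. -/
theorem no_closed_orbits (k n : ℕ) (hk : 0 < k) (hn : 0 < n) (c : ℝ) (hc : 1 ≤ c)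
    (x y : ℝ → ℝ)
    (hx : ∀ s : ℝ, HasDerivAt x (y s) s)
    (hy : ∀ s : ℝ, HasDerivAt y ((x s ^ k - c) * y s + x s * (x s ^ n - 1)) s)
    (T : ℝ) (hT : 0 < T)
    (hxper : Function.Periodic x T) (hyper : Function.Periodic y T) :
    ∀ s : ℝ, x s = x 0 ∧ y s = y 0 := by
  have hxd : Differentiable ℝ x := fun s => (hx s).differentiableAt
  have hyd : Differentiable ℝ y := fun s => (hy s).differentiableAt
  have hxc : Continuous x := hxd.continuous
  have hyc : Continuous y := hyd.continuous
  have hc0 : (0:ℝ) < c := lt_of_lt_of_le one_pos hc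
  have hkne : k ≠ 0 := hk.ne'
  have hnne : n ≠ 0 := hn.ne'
  -- global maximum of x
  obtain ⟨sM, hsMm, hsM⟩ := isCompact_Icc.exists_isMaxOn
    (⟨0, le_refl 0, le_of_lt hT⟩ : (Set.Icc (0:ℝ) T).Nonempty) hxc.continuousOn
  have hmaxM : ∀ s, x s ≤ x sM := by
    intro s
    obtain ⟨t, ht, hxt⟩ := hxper.exists_mem_Ico₀ hT s
    rw [hxt]
    exact hsM ⟨ht.1, le_of_lt ht.2⟩
  -- global minimum of x
  obtain ⟨sm, hsmm, hsm⟩ := isCompact_Icc.exists_isMinOn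
    (⟨0, le_refl 0, le_of_lt hT⟩ : (Set.Icc (0:ℝ) T).Nonempty) hxc.continuousOn
  have hminM : ∀ s, x sm ≤ x s := by
    intro s
    obtain ⟨t, ht, hxt⟩ := hxper.exists_mem_Ico₀ hT s
    rw [hxt]
    exact hsm ⟨ht.1, le_of_lt ht.2⟩
  -- at the max: g(x sM) ≤ 0
  have hlmM : IsLocalMax x sM := Filter.Eventually.of_forall fun s => hmaxM s
  have hy0M : y sM = 0 := hlmM.hasDerivAt_eq_zero (hx sM)
  have hgmax : x sM * (x sM ^ n - 1) ≤ 0 := by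
    have h := snd_deriv_nonpos_at_max hx hyc (hy sM) hmaxM
    rw [hy0M] at h
    simpa using h
  -- at the min: g(x sm) ≥ 0
  have hlmm : IsLocalMin x sm := Filter.Eventually.of_forall fun s => hminM s
  have hy0m : y sm = 0 := hlmm.hasDerivAt_eq_zero (hx sm)
  have hgmin : 0 ≤ x sm * (x sm ^ n - 1) := by
    have h := snd_deriv_nonneg_at_min hx hyc (hy sm) hminM
    rw [hy0m] at h
    simpa using h
  -- x ≤ 1 everywhere
  have hx1 : ∀ s, x s ≤ 1 := by
    intro s
    refine le_trans (hmaxM s) ?_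
    by_contra h
    push_neg at h
    have h1 : 1 < x sM ^ n := one_lt_pow₀ h hnne
    have hp : 0 < x sM * (x sM ^ n - 1) := mul_pos (by linarith) (by linarith)
    linarith
  -- energy function derivative
  have hE : ∀ s, HasDerivAt (fun u => y u ^ 2 / 2 - (x u ^ (n+2) / ((n:ℝ)+2) - x u ^ 2 / 2))
      ((x s ^ k - c) * y s ^ 2) s := by
    intro s
    have h1 := ((hy s).pow 2).div_const 2
    have h2 := ((hx s).pow (n+2)).div_const ((n:ℝ)+2)
    have h3 := ((hx s).pow 2).div_const 2
    have h4 := h1.sub (h2.sub h3)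
    refine h4.congr_deriv ?_
    have hne : ((n:ℝ)+2) ≠ 0 := by positivity
    push_cast
    simp only [pow_one, Nat.add_sub_cancel]
    field_simp
    ring
  -- main bound : x s ^ k ≤ c for all s
  have hxkc : ∀ s, x s ^ k ≤ c := by
    rcases Nat.even_or_odd k with hke | hko
    · rcases Nat.even_or_odd n with hne' | hno
      · -- k even, n even : -1 ≤ x everywhere
        have hm1 : -1 ≤ x sm := by
          by_contra h
          push_neg at h
          have habs : 1 < |x sm| := by
            rw [abs_of_neg (by linarith)]
            linarith
          have h1 : 1 < x sm ^ n := by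
            have := one_lt_pow₀ habs hnne
            rwa [hne'.pow_abs] at this
          have hp : x sm * (x sm ^ n - 1) < 0 := mul_neg_of_neg_of_pos (by linarith) (by linarith)
          linarith
        intro s
        have h1 : |x s| ≤ 1 := abs_le.mpr ⟨le_trans hm1 (hminM s), hx1 s⟩
        calc x s ^ k ≤ |x s ^ k| := le_abs_self _
          _ = |x s| ^ k := abs_pow _ _
          _ ≤ 1 ^ k := pow_le_pow_left₀ (abs_nonneg _) h1 k
          _ = 1 := one_pow k
          _ ≤ c := hc
      · -- k even, n odd : the dip argument
        set ρ : ℝ := c ^ ((k:ℝ))⁻¹ with hρdef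
        have hρ1 : 1 ≤ ρ := Real.one_le_rpow hc (by positivity)
        have hρk : ρ ^ k = c :=
          Real.rpow_natCast _ k ▸ Real.rpow_inv_natCast_pow (le_of_lt hc0) hkne
        suffices hbound : ∀ s, -ρ ≤ x s by
          intro s
          have habs : |x s| ≤ ρ := abs_le.mpr ⟨hbound s, le_trans (hx1 s) hρ1⟩
          calc x s ^ k ≤ |x s ^ k| := le_abs_self _
            _ = |x s| ^ k := abs_pow _ _
            _ ≤ ρ ^ k := pow_le_pow_left₀ (abs_nonneg _) habs k
            _ = c := hρk
        by_contra hB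
        push_neg at hB
        obtain ⟨s₀, hs₀⟩ := hB
        have hminρ : x sm < -ρ := lt_of_le_of_lt (hminM s₀) hs₀
        have hρ0 : (0:ℝ) < ρ := lt_of_lt_of_le one_pos hρ1
        -- the window
        set W : Set ℝ := Set.Icc (sm - T) sm with hWdef
        set Zx : Set ℝ := W ∩ x ⁻¹' {0} with hZxdef
        have hZxc : IsCompact Zx :=
          isCompact_Icc.inter_right (isClosed_singleton.preimage hxc)
        by_cases hne2 : Zx.Nonempty
        · -- main branch: x vanishes in the window
          set sc := sSup Zx with hscdef
          have hscZ : sc ∈ Zx := hZxc.sSup_mem hne2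
          have hxsc : x sc = 0 := hscZ.2
          have hscW : sc ∈ W := hscZ.1
          have hscsm : sc < sm := by
            rcases lt_or_eq_of_le hscZ.1.2 with h | h
            · exact h
            · exfalso; rw [h] at hxsc; linarith
          have hxle0 : ∀ u ∈ Set.Ioc sc sm, x u ≤ 0 := by
            intro u hu
            by_contra hpos'
            push_neg at hpos'
            have hmem : (0:ℝ) ∈ Set.Icc (x sm) (x u) := ⟨by linarith, le_of_lt hpos'⟩
            obtain ⟨τ, hτ, hxτ⟩ := intermediate_value_Icc' hu.2 hxc.continuousOn hmem
            have hτZ : τ ∈ Zx :=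
              ⟨⟨le_trans hscW.1 (le_trans (le_of_lt hu.1) hτ.1), hτ.2⟩, hxτ⟩
            have h5 : τ ≤ sc := le_csSup hZxc.bddAbove hτZ
            have h6 : u ≤ τ := hτ.1
            linarith [hu.1]
          -- first crossing of -ρ after sc
          set S1 : Set ℝ := Set.Icc sc sm ∩ x ⁻¹' {-ρ} with hS1def
          have hS1c : IsCompact S1 :=
            isCompact_Icc.inter_right (isClosed_singleton.preimage hxc)
          have hS1ne : S1.Nonempty := by
            have hmem : -ρ ∈ Set.Icc (x sm) (x sc) := ⟨le_of_lt hminρ, by rw [hxsc]; linarith⟩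
            obtain ⟨τ, hτ, hxτ⟩ :=
              intermediate_value_Icc' (le_of_lt hscsm) hxc.continuousOn hmem
            exact ⟨τ, hτ, hxτ⟩
          set s1 := sInf S1 with hs1def
          have hs1 : s1 ∈ S1 := hS1c.sInf_mem hS1ne
          have hxs1 : x s1 = -ρ := hs1.2
          have hs1cc : sc < s1 := by
            rcases lt_or_eq_of_le hs1.1.1 with h | h
            · exact h
            · exfalso; rw [← h] at hxs1; rw [hxsc] at hxs1; linarith
          have hxgeρ : ∀ u ∈ Set.Icc sc s1, -ρ ≤ x u := by
            intro u hu
            by_contra h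
            push_neg at h
            have hus1 : u < s1 := by
              rcases lt_or_eq_of_le hu.2 with h2 | h2
              · exact h2
              · exfalso; rw [h2, hxs1] at h; linarith
            have hmem : -ρ ∈ Set.Icc (x u) (x sc) := ⟨le_of_lt h, by rw [hxsc]; linarith⟩
            obtain ⟨τ, hτ, hxτ⟩ := intermediate_value_Icc' hu.1 hxc.continuousOn hmem
            have hτS : τ ∈ S1 :=
              ⟨⟨hτ.1, le_trans hτ.2 (le_trans (le_of_lt hus1) hs1.1.2)⟩, hxτ⟩
            have h5 : s1 ≤ τ := csInf_le hS1c.bddBelow hτS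
            linarith [hτ.2]
          -- last zero of y before sc
          set Zy : Set ℝ := Set.Icc (sm - T) sc ∩ y ⁻¹' {0} with hZydef
          have hZyc : IsCompact Zy :=
            isCompact_Icc.inter_right (isClosed_singleton.preimage hyc)
          have hyT : y (sm - T) = 0 := by
            have h5 := hyper (sm - T)
            rw [sub_add_cancel] at h5
            rw [← h5]; exact hy0m
          have hZyne : Zy.Nonempty := ⟨sm - T, ⟨le_refl _, hscW.1⟩, hyT⟩
          set sd := sSup Zy with hsddef
          have hsd : sd ∈ Zy := hZyc.sSup_mem hZyne
          have hysd : y sd = 0 := hsd.2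
          have hsdsc : sd ≤ sc := hsd.1.2
          -- y sc ≤ 0 via right slope of x at sc
          have hysc : y sc ≤ 0 := by
            have ht : Filter.Tendsto (slope x sc) (nhdsWithin sc (Set.Ioi sc)) (nhds (y sc)) :=
              (hasDerivAt_iff_tendsto_slope.mp (hx sc)).mono_left
                (nhdsWithin_mono _ (fun u hu => Set.mem_compl_singleton_iff.mpr (ne_of_gt hu)))
            refine le_of_tendsto ht ?_
            filter_upwards [Ioc_mem_nhdsGT_of_mem ⟨le_refl sc, hscsm⟩] with u hu
            rw [slope_def_field]
            apply div_nonpos_of_nonpos_of_nonneg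
            · rw [hxsc]; simpa using hxle0 u hu
            · linarith [hu.1]
          -- y ≤ 0 on [sd, sc]
          have hyle : ∀ u ∈ Set.Icc sd sc, y u ≤ 0 := by
            intro u hu
            by_contra h
            push_neg at h
            have h2 : sd < u := by
              rcases lt_or_eq_of_le hu.1 with h3 | h3
              · exact h3
              · exfalso; rw [← h3, hysd] at h; linarith
            have hmem : (0:ℝ) ∈ Set.Icc (y sc) (y u) := ⟨hysc, le_of_lt h⟩
            obtain ⟨τ, hτ, hyτ⟩ := intermediate_value_Icc' hu.2 hyc.continuousOn hmem
            have hτZ : τ ∈ Zy :=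
              ⟨⟨le_trans hsd.1.1 (le_trans (le_of_lt h2) hτ.1), hτ.2⟩, hyτ⟩
            have h5 : τ ≤ sd := le_csSup hZyc.bddAbove hτZ
            linarith [hτ.1]
          -- x ≥ 0 on [sd, sc]
          have hx0 : ∀ u ∈ Set.Icc sd sc, 0 ≤ x u := by
            intro u hu
            have hint : ∫ t in u..sc, y t = x sc - x u :=
              intervalIntegral.integral_eq_sub_of_hasDerivAt (fun t _ => hx t)
                (hyc.intervalIntegrable _ _)
            have h5 : 0 ≤ ∫ t in u..sc, -(y t) :=
              intervalIntegral.integral_nonneg hu.2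
                (fun t ht => neg_nonneg.mpr (hyle t ⟨le_trans hu.1 ht.1, ht.2⟩))
            rw [intervalIntegral.integral_neg, hint] at h5
            rw [hxsc] at h5
            linarith
          -- energy decreases from sd to s1
          have hsds1 : sd ≤ s1 := le_trans hsdsc (le_of_lt hs1cc)
          have hcontE : Continuous fun s => (x s ^ k - c) * y s ^ 2 :=
            ((hxc.pow k).sub continuous_const).mul (hyc.pow 2)
          have hER : (y s1 ^ 2 / 2 - (x s1 ^ (n+2) / ((n:ℝ)+2) - x s1 ^ 2 / 2)) -
              (y sd ^ 2 / 2 - (x sd ^ (n+2) / ((n:ℝ)+2) - x sd ^ 2 / 2)) =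
              ∫ u in sd..s1, (x u ^ k - c) * y u ^ 2 :=
            (intervalIntegral.integral_eq_sub_of_hasDerivAt (fun t _ => hE t)
              (hcontE.intervalIntegrable _ _)).symm
          have hxkle : ∀ u ∈ Set.Icc sd s1, x u ^ k ≤ c := by
            intro u hu
            rcases le_total u sc with h | h
            · have h1 : 0 ≤ x u := hx0 u ⟨hu.1, h⟩
              have h2 : x u ≤ 1 := hx1 u
              calc x u ^ k ≤ 1 ^ k := pow_le_pow_left₀ h1 h2 k
                _ = 1 := one_pow k
                _ ≤ c := hc
            · have h1 : -ρ ≤ x u := hxgeρ u ⟨h, hu.2⟩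
              have habs : |x u| ≤ ρ := abs_le.mpr ⟨h1, le_trans (hx1 u) hρ1⟩
              calc x u ^ k ≤ |x u ^ k| := le_abs_self _
                _ = |x u| ^ k := abs_pow _ _
                _ ≤ ρ ^ k := pow_le_pow_left₀ (abs_nonneg _) habs k
                _ = c := hρk
          have hint_np : ∫ u in sd..s1, (x u ^ k - c) * y u ^ 2 ≤ 0 := by
            have h5 : 0 ≤ ∫ u in sd..s1, -((x u ^ k - c) * y u ^ 2) := by
              apply intervalIntegral.integral_nonneg hsds1
              intro u hu
              have h6 : x u ^ k - c ≤ 0 := sub_nonpos.mpr (hxkle u hu)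
              have h7 := mul_nonpos_iff.mpr (Or.inr ⟨h6, sq_nonneg (y u)⟩)
              linarith
            rw [intervalIntegral.integral_neg] at h5
            linarith
          -- arithmetic contradiction
          have hNpos : (0:ℝ) < (n:ℝ)+2 := by positivity
          have hodd2 : Odd (n+2) := by
            obtain ⟨m, hm⟩ := hno
            exact ⟨m+1, by omega⟩
          have hpow1 : x s1 ^ (n+2) = -(ρ^(n+2)) := by
            rw [hxs1]
            exact hodd2.neg_pow ρ
          have hpow2 : x s1 ^ 2 = ρ^2 := by rw [hxs1]; ring
          have h3 : 1 ≤ ρ^(n+2) := by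
            have := pow_le_pow_left₀ (by norm_num : (0:ℝ) ≤ 1) hρ1 (n+2)
            simpa using this
          have h4 : 1 ≤ ρ^2 := by
            have := pow_le_pow_left₀ (by norm_num : (0:ℝ) ≤ 1) hρ1 2
            simpa using this
          have hA : 1/((n:ℝ)+2) ≤ ρ^(n+2)/((n:ℝ)+2) := by gcongr
          have hEs1 : (1:ℝ)/2 + 1/((n:ℝ)+2) ≤
              y s1 ^ 2 / 2 - (x s1 ^ (n+2) / ((n:ℝ)+2) - x s1 ^ 2 / 2) := by
            rw [hpow1, hpow2]
            have hy2 : 0 ≤ y s1 ^ 2 / 2 := by positivity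
            have hnegdiv : -(ρ^(n+2))/((n:ℝ)+2) = -(ρ^(n+2)/((n:ℝ)+2)) := by ring
            rw [hnegdiv]
            linarith
          have hEsd : y sd ^ 2 / 2 - (x sd ^ (n+2) / ((n:ℝ)+2) - x sd ^ 2 / 2) ≤ 1/2 := by
            rw [hysd]
            have h1 : 0 ≤ x sd := hx0 sd ⟨le_refl _, hsdsc⟩
            have h2 : x sd ≤ 1 := hx1 sd
            have h5 : 0 ≤ x sd ^ (n+2) / ((n:ℝ)+2) := by positivity
            have h6 : x sd ^ 2 ≤ 1 := by
              calc x sd ^ 2 ≤ 1 ^ 2 := pow_le_pow_left₀ h1 h2 2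
                _ = 1 := one_pow 2
            have h0 : (0:ℝ)^2/2 = 0 := by norm_num
            linarith
          have hposn : (0:ℝ) < 1/((n:ℝ)+2) := by positivity
          linarith
        · -- x never vanishes in the window ⟹ x < 0 on the window ⟹ ∫ g > 0 = 0
          have hneg : ∀ u ∈ W, x u < 0 := by
            intro u hu
            rcases lt_trichotomy (x u) 0 with h | h | h
            · exact h
            · exact absurd ⟨u, hu, h⟩ hne2
            · exfalso
              have hmem : (0:ℝ) ∈ Set.Icc (x sm) (x u) := ⟨by linarith, le_of_lt h⟩
              obtain ⟨τ, hτ, hxτ⟩ := intermediate_value_Icc' hu.2 hxc.continuousOn hmem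
              exact hne2 ⟨τ, ⟨le_trans hu.1 hτ.1, hτ.2⟩, hxτ⟩
          have hL : ∀ s, HasDerivAt
              (fun u => y u - (x u ^ (k+1) / ((k:ℝ)+1) - c * x u))
              (x s * (x s ^ n - 1)) s := by
            intro s
            have h1 := (hy s).sub ((((hx s).pow (k+1)).div_const ((k:ℝ)+1)).sub
              ((hx s).const_mul c))
            refine h1.congr_deriv ?_
            have hne : ((k:ℝ)+1) ≠ 0 := by positivity
            push_cast
            try simp only [Nat.add_sub_cancel]
            try simp only [pow_one]
            field_simp
            ring
          have hcontg : Continuous fun u => x u * (x u ^ n - 1) :=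
            hxc.mul ((hxc.pow n).sub continuous_const)
          have hzero : ∫ u in (sm - T)..sm, x u * (x u ^ n - 1) =
              (y sm - (x sm ^ (k+1) / ((k:ℝ)+1) - c * x sm)) -
              (y (sm - T) - (x (sm - T) ^ (k+1) / ((k:ℝ)+1) - c * x (sm - T))) :=
            intervalIntegral.integral_eq_sub_of_hasDerivAt (fun t _ => hL t)
              (hcontg.intervalIntegrable _ _)
          have hxTw : x (sm - T) = x sm := by
            have h5 := hxper (sm - T)
            rw [sub_add_cancel] at h5
            exact h5.symm
          have hyTw : y (sm - T) = y sm := by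
            have h5 := hyper (sm - T)
            rw [sub_add_cancel] at h5
            exact h5.symm
          have hzero2 : ∫ u in (sm - T)..sm, x u * (x u ^ n - 1) = 0 := by
            rw [hzero, hxTw, hyTw]
            ring
          have hpos : 0 < ∫ u in (sm - T)..sm, x u * (x u ^ n - 1) := by
            apply intervalIntegral.intervalIntegral_pos_of_pos_on
              (hcontg.intervalIntegrable _ _) _ (by linarith)
            intro u hu
            have h1 : x u < 0 := hneg u ⟨le_of_lt hu.1, le_of_lt hu.2⟩
            have h2 : x u ^ n < 0 := hno.pow_neg h1
            exact mul_pos_of_neg_of_neg h1 (by linarith)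
          linarith
    · -- k odd
      intro s
      have h1 := hx1 s
      rcases le_or_gt (x s) 0 with h0 | h0
      · exact le_trans (le_trans (hko.pow_nonpos h0) zero_le_one) hc
      · calc x s ^ k ≤ 1 ^ k := pow_le_pow_left₀ (le_of_lt h0) h1 k
          _ = 1 := one_pow k
          _ ≤ c := hc
  -- the energy identity over one period
  have hcontE : Continuous fun s => (x s ^ k - c) * y s ^ 2 :=
    ((hxc.pow k).sub continuous_const).mul (hyc.pow 2)
  have hiden : ∫ s in (0:ℝ)..T, (x s ^ k - c) * y s ^ 2 = 0 := by
    have h5 := intervalIntegral.integral_eq_sub_of_hasDerivAt (fun t (_ : t ∈ Set.uIcc 0 T) => hE t)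
      (hcontE.intervalIntegrable _ _)
    rw [h5]
    have hxT : x T = x 0 := by have := hxper 0; rwa [zero_add] at this
    have hyT : y T = y 0 := by have := hyper 0; rwa [zero_add] at this
    rw [hxT, hyT]
    ring
  -- the nonnegative integrand vanishes identically
  have hh0 : ∀ s, (c - x s ^ k) * y s ^ 2 = 0 := by
    apply periodic_nonneg_integral_zero hT
    · exact ((continuous_const.sub (hxc.pow k))).mul (hyc.pow 2)
    · intro s
      exact mul_nonneg (by linarith [hxkc s]) (sq_nonneg (y s))
    · intro s
      simp only
      rw [hxper s, hyper s]
    · have hfun : (fun s => (c - x s ^ k) * y s ^ 2) =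
          fun s => -((x s ^ k - c) * y s ^ 2) := by
        funext s; ring
      rw [hfun, intervalIntegral.integral_neg, hiden, neg_zero]
  -- conclude y ≡ 0
  have hy0 : ∀ s, y s = 0 := by
    intro s₀
    by_contra hy₀
    have hsne : ∀ᶠ u in nhds s₀, y u ≠ 0 := (hyc.continuousAt).eventually_ne hy₀
    have hxk : ∀ᶠ u in nhds s₀, x u ^ k = c := by
      filter_upwards [hsne] with u hu
      have h5 := hh0 u
      rcases mul_eq_zero.mp h5 with h | h
      · linarith [sub_eq_zero.mp h]
      · exact absurd (pow_eq_zero_iff (two_ne_zero)|>.mp h) hu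
    have hconst : HasDerivAt (fun u => x u ^ k) 0 s₀ := by
      have hEq : (fun u => x u ^ k) =ᶠ[nhds s₀] fun _ => c := hxk
      exact (Filter.EventuallyEq.hasDerivAt_iff hEq).mpr (hasDerivAt_const s₀ c)
    have hpow : HasDerivAt (fun u => x u ^ k) ((k:ℝ) * x s₀ ^ (k-1) * y s₀) s₀ := (hx s₀).pow k
    have huniq : (k:ℝ) * x s₀ ^ (k-1) * y s₀ = 0 := hpow.unique hconst
    have hk0 : (k:ℝ) ≠ 0 := Nat.cast_ne_zero.mpr hkne
    have hxpow : x s₀ ^ (k-1) = 0 := by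
      rcases mul_eq_zero.mp huniq with h | h
      · rcases mul_eq_zero.mp h with h2 | h2
        · exact absurd h2 hk0
        · exact h2
      · exact absurd h hy₀
    have hcs : x s₀ ^ k = c := hxk.self_of_nhds
    by_cases hk1 : k = 1
    · rw [hk1] at hxpow
      simp at hxpow
    · have hk1' : k - 1 ≠ 0 := by omega
      have hx0' : x s₀ = 0 := pow_eq_zero_iff hk1' |>.mp hxpow
      rw [hx0', zero_pow hkne] at hcs
      linarith
  have hxconst : ∀ s, x s = x 0 := fun s =>
    is_const_of_deriv_eq_zero hxd (fun u => by rw [(hx u).deriv, hy0 u]) s 0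
  intro s
  exact ⟨hxconst s, by rw [hy0 s, hy0 0]⟩
end

section
/- Let k ≥ 1 be an integer. If k is odd, then there exists a unique θ ∈ (π/2, π) such that cos(θ)^{k+1} = (k + 1)·sin(θ)^k. If k is even, then there exists a unique θ ∈ (3π/2, 2π) such that cos(θ)^{k+1} = (k + 1)·sin(θ)^k. -/
open Real

private lemma key_aux (k : ℕ) (hk : 1 ≤ k) (a b : ℝ) (hab : a < b)
    (hsin : ∀ θ ∈ Set.Ioo a b, Real.cos θ ^ k * Real.sin θ < 0)
    (hsc : ∀ θ ∈ Set.Ioo a b, Real.sin θ ^ (k - 1) * Real.cos θ ≤ 0)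
    (hfa : Real.cos a ^ (k + 1) - (k + 1) * Real.sin a ^ k < 0)
    (hfb : 0 < Real.cos b ^ (k + 1) - (k + 1) * Real.sin b ^ k) :
    ∃! θ : ℝ, θ ∈ Set.Ioo a b ∧
      Real.cos θ ^ (k + 1) = (k + 1 : ℝ) * Real.sin θ ^ k := by
  set f : ℝ → ℝ := fun θ => Real.cos θ ^ (k + 1) - (k + 1) * Real.sin θ ^ k with hf
  have hcont : Continuous f := by
    unfold f; fun_prop
  have hderiv : ∀ θ : ℝ, HasDerivAt f
      (((k + 1 : ℕ) : ℝ) * Real.cos θ ^ k * (-Real.sin θ)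
        - (k + 1) * (((k : ℕ) : ℝ) * Real.sin θ ^ (k - 1) * Real.cos θ)) θ := by
    intro θ
    have h1 : HasDerivAt (fun θ => Real.cos θ ^ (k + 1))
        (((k + 1 : ℕ) : ℝ) * Real.cos θ ^ k * (-Real.sin θ)) θ := by
      simpa using (Real.hasDerivAt_cos θ).fun_pow (k + 1)
    have h2 : HasDerivAt (fun θ => Real.sin θ ^ k)
        (((k : ℕ) : ℝ) * Real.sin θ ^ (k - 1) * Real.cos θ) θ :=
      (Real.hasDerivAt_sin θ).pow k
    simpa using h1.fun_sub (h2.const_mul ((k + 1 : ℝ)))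
  have hmono : StrictMonoOn f (Set.Icc a b) := by
    apply strictMonoOn_of_deriv_pos (convex_Icc a b) hcont.continuousOn
    intro x hx
    rw [interior_Icc] at hx
    rw [(hderiv x).deriv]
    have h1 := hsin x hx
    have h2 := hsc x hx
    have hk' : (1 : ℝ) ≤ (k : ℝ) := by exact_mod_cast hk
    push_cast
    nlinarith [mul_pos (show (0:ℝ) < (k:ℝ) + 1 by linarith) (neg_pos.mpr h1),
      mul_nonneg (mul_nonneg (show (0:ℝ) ≤ (k:ℝ) + 1 by linarith)
        (show (0:ℝ) ≤ (k:ℝ) by linarith)) (neg_nonneg.mpr h2)]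
  have hex : (0 : ℝ) ∈ f '' Set.Ioo a b := by
    apply intermediate_value_Ioo hab.le hcont.continuousOn
    exact ⟨hfa, hfb⟩
  obtain ⟨θ, hθ, hθ0⟩ := hex
  refine ⟨θ, ⟨hθ, by have := hθ0; simp only [hf] at this; linarith⟩, ?_⟩
  rintro y ⟨hy, hyeq⟩
  have hfy : f y = 0 := by simp only [hf]; linarith
  exact hmono.injOn (Set.Ioo_subset_Icc_self hy) (Set.Ioo_subset_Icc_self hθ)
    (by rw [hfy, hθ0])

/-- For `k ≥ 1`: if `k` is odd there is a unique `θ ∈ (π/2, π)` with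
`cos(θ)^{k+1} = (k+1)·sin(θ)^k`, and if `k` is even there is a unique such
`θ ∈ (3π/2, 2π)`. -/
theorem unique_theta3 (k : ℕ) (hk : 1 ≤ k) :
    (Odd k → ∃! θ : ℝ, θ ∈ Set.Ioo (π / 2) π ∧
      Real.cos θ ^ (k + 1) = (k + 1 : ℝ) * Real.sin θ ^ k) ∧
    (Even k → ∃! θ : ℝ, θ ∈ Set.Ioo (3 * π / 2) (2 * π) ∧
      Real.cos θ ^ (k + 1) = (k + 1 : ℝ) * Real.sin θ ^ k) := by
  have hpi := Real.pi_pos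
  constructor
  · intro hodd
    apply key_aux k hk _ _ (by linarith)
    · intro θ hθ
      have hs : 0 < Real.sin θ := Real.sin_pos_of_pos_of_lt_pi (by linarith [hθ.1]) hθ.2
      have hc : Real.cos θ < 0 :=
        Real.cos_neg_of_pi_div_two_lt_of_lt hθ.1 (by linarith [hθ.2])
      exact mul_neg_of_neg_of_pos (hodd.pow_neg hc) hs
    · intro θ hθ
      have hs : 0 < Real.sin θ := Real.sin_pos_of_pos_of_lt_pi (by linarith [hθ.1]) hθ.2
      have hc : Real.cos θ < 0 :=
        Real.cos_neg_of_pi_div_two_lt_of_lt hθ.1 (by linarith [hθ.2])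
      have hev : Even (k - 1) := Nat.Odd.sub_odd hodd odd_one
      exact mul_nonpos_of_nonneg_of_nonpos (hev.pow_nonneg _) hc.le
    · rw [Real.cos_pi_div_two, Real.sin_pi_div_two]
      have : (0 : ℝ) ^ (k + 1) = 0 := zero_pow (Nat.succ_ne_zero k)
      rw [this, one_pow]
      have : (0 : ℝ) < (k : ℝ) + 1 := by positivity
      linarith
    · rw [Real.cos_pi, Real.sin_pi]
      have h0 : (0 : ℝ) ^ k = 0 := zero_pow (by omega)
      rw [h0, (hodd.add_one).neg_one_pow]
      linarith
  · intro heven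
    apply key_aux k hk _ _ (by linarith)
    · intro θ hθ
      have hce : Real.cos θ = Real.cos (θ - 2 * π) := (Real.cos_sub_two_pi θ).symm
      have hse : Real.sin θ = Real.sin (θ - 2 * π) := (Real.sin_sub_two_pi θ).symm
      have hc : 0 < Real.cos θ := by
        rw [hce]
        exact Real.cos_pos_of_mem_Ioo ⟨by linarith [hθ.1], by linarith [hθ.2]⟩
      have hs : Real.sin θ < 0 := by
        rw [hse]
        exact Real.sin_neg_of_neg_of_neg_pi_lt (by linarith [hθ.2]) (by linarith [hθ.1])
      exact mul_neg_of_pos_of_neg (pow_pos hc k) hs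
    · intro θ hθ
      have hce : Real.cos θ = Real.cos (θ - 2 * π) := (Real.cos_sub_two_pi θ).symm
      have hse : Real.sin θ = Real.sin (θ - 2 * π) := (Real.sin_sub_two_pi θ).symm
      have hc : 0 < Real.cos θ := by
        rw [hce]
        exact Real.cos_pos_of_mem_Ioo ⟨by linarith [hθ.1], by linarith [hθ.2]⟩
      have hs : Real.sin θ < 0 := by
        rw [hse]
        exact Real.sin_neg_of_neg_of_neg_pi_lt (by linarith [hθ.2]) (by linarith [hθ.1])
      have hodd' : Odd (k - 1) := Nat.Even.sub_odd hk heven odd_one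
      exact mul_nonpos_of_nonpos_of_nonneg (hodd'.pow_nonpos hs.le) hc.le
    · have h32 : (3 * π / 2 : ℝ) = π + π / 2 := by ring
      rw [h32]
      simp only [Real.cos_add, Real.sin_add, Real.cos_pi, Real.sin_pi,
        Real.cos_pi_div_two, Real.sin_pi_div_two]
      ring_nf
      rw [show ((-1:ℝ)) ^ k = 1 from heven.neg_one_pow]
      have : (0 : ℝ) ≤ (k : ℝ) := Nat.cast_nonneg k
      nlinarith
    · rw [Real.cos_two_pi, Real.sin_two_pi]
      have h0 : (0 : ℝ) ^ k = 0 := zero_pow (by omega)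
      rw [h0, one_pow]
      linarith
end

section
/- Let k ≥ 1 be an integer. The set of solutions θ ∈ [0, 2π) of the equation sin(θ)·(cos(θ)^{k+1} − (k + 1)·sin(θ)^k) = 0 is exactly {0, π, θ₁, θ₃}, where θ₁ is the unique solution of cos(θ)^{k+1} = (k + 1)·sin(θ)^k in (0, π/2), and θ₃ is the unique solution of cos(θ)^{k+1} = (k + 1)·sin(θ)^k in (π/2, π) if k is odd and in (3π/2, 2π) if k is even. In particular, the equation sin(θ)·(cos(θ)^{k+1} − (k + 1)·sin(θ)^k) = 0 has exactly four solutions in [0, 2π). -/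
open Real

private lemma aux1 (k : ℕ) (hk : 1 ≤ k) {a b : ℝ}
    (ha : a ∈ Set.Ioo 0 (π / 2)) (hb : b ∈ Set.Ioo 0 (π / 2)) (hab : a < b)
    (hea : Real.cos a ^ (k + 1) = (k + 1 : ℝ) * Real.sin a ^ k)
    (heb : Real.cos b ^ (k + 1) = (k + 1 : ℝ) * Real.sin b ^ k) : False := by
  have hpi := Real.pi_pos
  have hcb : 0 < Real.cos b := Real.cos_pos_of_mem_Ioo ⟨by linarith [ha.1], hb.2⟩
  have hca : Real.cos b < Real.cos a :=
    Real.cos_lt_cos_of_nonneg_of_le_pi ha.1.le (by linarith [hb.2]) hab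
  have hc : Real.cos b ^ (k + 1) < Real.cos a ^ (k + 1) :=
    pow_lt_pow_left₀ hca hcb.le (by omega)
  have hsa : 0 < Real.sin a := Real.sin_pos_of_pos_of_lt_pi ha.1 (by linarith [ha.2])
  have hs : Real.sin a < Real.sin b :=
    Real.strictMonoOn_sin ⟨by linarith [ha.1], ha.2.le⟩ ⟨by linarith [hb.1], hb.2.le⟩ hab
  have hsk : Real.sin a ^ k < Real.sin b ^ k := pow_lt_pow_left₀ hs hsa.le (by omega)
  have hmul : (k + 1 : ℝ) * Real.sin a ^ k < (k + 1 : ℝ) * Real.sin b ^ k :=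
    mul_lt_mul_of_pos_left hsk (by positivity)
  linarith

private lemma aux2 (k : ℕ) (hk : Odd k) (hk1 : 1 ≤ k) {a b : ℝ}
    (ha : a ∈ Set.Ioo (π / 2) π) (hb : b ∈ Set.Ioo (π / 2) π) (hab : a < b)
    (hea : Real.cos a ^ (k + 1) = (k + 1 : ℝ) * Real.sin a ^ k)
    (heb : Real.cos b ^ (k + 1) = (k + 1 : ℝ) * Real.sin b ^ k) : False := by
  have hpi := Real.pi_pos
  have hk1 : Even (k + 1) := hk.add_one
  have hca : Real.cos b < Real.cos a :=
    Real.cos_lt_cos_of_nonneg_of_le_pi (by linarith [ha.1]) hb.2.le hab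
  have hcaneg : Real.cos a < 0 := Real.cos_neg_of_pi_div_two_lt_of_lt ha.1 (by linarith [ha.2])
  have hc : Real.cos a ^ (k + 1) < Real.cos b ^ (k + 1) := by
    rw [← hk1.neg_pow (Real.cos a), ← hk1.neg_pow (Real.cos b)]
    exact pow_lt_pow_left₀ (by linarith) (by linarith) (by omega)
  -- sin b < sin a on (π/2, π)
  have hsb : 0 < Real.sin b := Real.sin_pos_of_pos_of_lt_pi (by linarith [hb.1]) hb.2
  have hs : Real.sin b < Real.sin a := by
    have h1 : Real.sin (π - b) < Real.sin (π - a) :=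
      Real.strictMonoOn_sin ⟨by linarith [hb.2], by linarith [hb.1]⟩
        ⟨by linarith [ha.2], by linarith [ha.1]⟩ (by linarith)
    rwa [Real.sin_pi_sub, Real.sin_pi_sub] at h1
  have hsk : Real.sin b ^ k < Real.sin a ^ k := pow_lt_pow_left₀ hs hsb.le (by omega)
  have hmul : (k + 1 : ℝ) * Real.sin b ^ k < (k + 1 : ℝ) * Real.sin a ^ k :=
    mul_lt_mul_of_pos_left hsk (by positivity)
  linarith

private lemma aux3 (k : ℕ) (hk : Even k) (hk1 : 1 ≤ k) {a b : ℝ}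
    (ha : a ∈ Set.Ioo (3 * π / 2) (2 * π)) (hb : b ∈ Set.Ioo (3 * π / 2) (2 * π)) (hab : a < b)
    (hea : Real.cos a ^ (k + 1) = (k + 1 : ℝ) * Real.sin a ^ k)
    (heb : Real.cos b ^ (k + 1) = (k + 1 : ℝ) * Real.sin b ^ k) : False := by
  have hpi := Real.pi_pos
  -- cos a < cos b, both positive
  have hca : Real.cos a < Real.cos b := by
    have h1 : Real.cos (2 * π - a) < Real.cos (2 * π - b) :=
      Real.cos_lt_cos_of_nonneg_of_le_pi (by linarith [hb.2]) (by linarith [ha.1]) (by linarith)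
    rwa [Real.cos_two_pi_sub, Real.cos_two_pi_sub] at h1
  have hcapos : 0 < Real.cos a := by
    have := Real.cos_pos_of_mem_Ioo (x := 2 * π - a)
      ⟨by linarith [ha.2], by linarith [ha.1]⟩
    rwa [Real.cos_two_pi_sub] at this
  have hc : Real.cos a ^ (k + 1) < Real.cos b ^ (k + 1) :=
    pow_lt_pow_left₀ hca hcapos.le (by omega)
  -- -sin b < -sin a, both positive
  have hs : Real.sin a < Real.sin b := by
    have h1 : Real.sin (2 * π - b) < Real.sin (2 * π - a) :=
      Real.strictMonoOn_sin ⟨by linarith [hb.2], by linarith [hb.1]⟩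
        ⟨by linarith [ha.2], by linarith [ha.1]⟩ (by linarith)
    rw [Real.sin_two_pi_sub, Real.sin_two_pi_sub] at h1
    linarith
  have hsbneg : Real.sin b < 0 := by
    have := Real.sin_pos_of_pos_of_lt_pi (x := 2 * π - b) (by linarith [hb.2]) (by linarith [hb.1])
    rw [Real.sin_two_pi_sub] at this
    linarith
  have hsk : Real.sin b ^ k < Real.sin a ^ k := by
    rw [← hk.neg_pow (Real.sin a), ← hk.neg_pow (Real.sin b)]
    exact pow_lt_pow_left₀ (by linarith) (by linarith) (by omega)
  have hmul : (k + 1 : ℝ) * Real.sin b ^ k < (k + 1 : ℝ) * Real.sin a ^ k :=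
    mul_lt_mul_of_pos_left hsk (by positivity)
  linarith

/-- The solutions `θ ∈ [0, 2π)` of `sin(θ)·(cos(θ)^{k+1} − (k+1)·sin(θ)^k) = 0` are
exactly `{0, π, θ₁, θ₃}`, where `θ₁` is the solution of
`cos(θ)^{k+1} = (k+1)·sin(θ)^k` in `(0, π/2)` and `θ₃` is the one in `(π/2, π)` for
`k` odd, respectively in `(3π/2, 2π)` for `k` even; in particular there are exactly
four solutions in `[0, 2π)`. -/
theorem blowup_equilibria_on_circle (k : ℕ) (hk : 1 ≤ k) (θ₁ θ₃ : ℝ)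
    (hθ₁mem : θ₁ ∈ Set.Ioo 0 (π / 2))
    (hθ₁eq : Real.cos θ₁ ^ (k + 1) = (k + 1 : ℝ) * Real.sin θ₁ ^ k)
    (hθ₃mem : (Odd k → θ₃ ∈ Set.Ioo (π / 2) π) ∧
              (Even k → θ₃ ∈ Set.Ioo (3 * π / 2) (2 * π)))
    (hθ₃eq : Real.cos θ₃ ^ (k + 1) = (k + 1 : ℝ) * Real.sin θ₃ ^ k) :
    {θ : ℝ | θ ∈ Set.Ico 0 (2 * π) ∧
        Real.sin θ * (Real.cos θ ^ (k + 1) - (k + 1 : ℝ) * Real.sin θ ^ k) = 0} =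
      {0, π, θ₁, θ₃} ∧
    ({0, π, θ₁, θ₃} : Set ℝ).ncard = 4 := by
  have hpi := Real.pi_pos
  -- basic facts about θ₃
  have hθ₃facts : π / 2 < θ₃ ∧ θ₃ ≠ π ∧ θ₃ < 2 * π := by
    rcases Nat.even_or_odd k with he | ho
    · obtain ⟨h1, h2⟩ := hθ₃mem.2 he
      exact ⟨by linarith, by intro h; rw [h] at h1; linarith, h2⟩
    · obtain ⟨h1, h2⟩ := hθ₃mem.1 ho
      exact ⟨h1, ne_of_lt h2, by linarith⟩
  constructor
  · ext θ
    simp only [Set.mem_setOf_eq, Set.mem_Ico, Set.mem_insert_iff, Set.mem_singleton_iff]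
    constructor
    · rintro ⟨⟨hθ0, hθ2π⟩, heq⟩
      rcases mul_eq_zero.mp heq with hs | hf
      · -- sin θ = 0 : θ = 0 or π
        obtain ⟨n, hn⟩ := Real.sin_eq_zero_iff.mp hs
        have hn0 : 0 ≤ n := by
          by_contra h
          push_neg at h
          have h' : (n : ℝ) ≤ -1 := by exact_mod_cast (by omega : n ≤ -1)
          nlinarith
        have hn1 : n ≤ 1 := by
          by_contra h
          push_neg at h
          have h' : (2 : ℝ) ≤ (n : ℝ) := by exact_mod_cast (by omega : (2:ℤ) ≤ n)
          nlinarith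
        interval_cases n
        · left; simpa using hn.symm
        · right; left; simpa using hn.symm
      · -- second factor zero
        have heq2 : Real.cos θ ^ (k + 1) = (k + 1 : ℝ) * Real.sin θ ^ k := by linarith [sub_eq_zero.mp hf]
        have hsinne : Real.sin θ ≠ 0 := by
          intro hs
          rw [hs, zero_pow (by omega), mul_zero] at heq2
          have hc0 : Real.cos θ = 0 := pow_eq_zero_iff (by omega) |>.mp heq2
          have := Real.sin_sq_add_cos_sq θ
          rw [hs, hc0] at this; norm_num at this
        have hθne0 : θ ≠ 0 := by intro h; rw [h, Real.sin_zero] at hsinne; exact hsinne rfl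
        have hθnepi : θ ≠ π := by intro h; rw [h, Real.sin_pi] at hsinne; exact hsinne rfl
        have hθpos : 0 < θ := lt_of_le_of_ne hθ0 (Ne.symm hθne0)
        rcases lt_trichotomy θ π with hlt | heqpi | hgt
        · -- θ ∈ (0, π)
          rcases lt_trichotomy θ (π / 2) with h1 | h1 | h1
          · -- (0, π/2): θ = θ₁
            right; right; left
            rcases lt_trichotomy θ θ₁ with h | h | h
            · exact absurd (aux1 k hk ⟨hθpos, h1⟩ hθ₁mem h heq2 hθ₁eq) (fun a => a)
            · exact h
            · exact absurd (aux1 k hk hθ₁mem ⟨hθpos, h1⟩ h hθ₁eq heq2) (fun a => a)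
          · -- θ = π/2 impossible
            exfalso
            rw [h1, Real.cos_pi_div_two, Real.sin_pi_div_two] at heq2
            simp [zero_pow (Nat.succ_ne_zero k)] at heq2
            have : (0:ℝ) < k + 1 := by positivity
            linarith [heq2]
          · -- θ ∈ (π/2, π)
            rcases Nat.even_or_odd k with he | ho
            · -- k even: contradiction
              exfalso
              have hcneg : Real.cos θ < 0 :=
                Real.cos_neg_of_pi_div_two_lt_of_lt h1 (by linarith)
              have hcpow : Real.cos θ ^ (k + 1) < 0 := (he.add_one).pow_neg hcneg
              have hspos : 0 < Real.sin θ := Real.sin_pos_of_pos_of_lt_pi hθpos hlt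
              have : 0 < (k + 1 : ℝ) * Real.sin θ ^ k := by positivity
              linarith
            · -- k odd: θ = θ₃
              right; right; right
              have hm := hθ₃mem.1 ho
              rcases lt_trichotomy θ θ₃ with h | h | h
              · exact absurd (aux2 k ho hk ⟨h1, hlt⟩ hm h heq2 hθ₃eq) (fun a => a)
              · exact h
              · exact absurd (aux2 k ho hk hm ⟨h1, hlt⟩ h hθ₃eq heq2) (fun a => a)
        · exact absurd heqpi hθnepi
        · -- θ ∈ (π, 2π)
          have hsneg : Real.sin θ < 0 := by
            have := Real.sin_pos_of_pos_of_lt_pi (x := 2 * π - θ) (by linarith) (by linarith)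
            rw [Real.sin_two_pi_sub] at this; linarith
          rcases Nat.even_or_odd k with he | ho
          · -- k even : θ ∈ (3π/2, 2π), θ = θ₃
            right; right; right
            have hspos : 0 < Real.sin θ ^ k := he.pow_pos hsinne
            have hcpos : 0 < Real.cos θ := by
              have h1 : 0 < Real.cos θ ^ (k + 1) := by
                rw [heq2]; positivity
              exact ((he.add_one).pow_pos_iff).mp h1
            have h32 : 3 * π / 2 < θ := by
              by_contra h
              push_neg at h
              have := Real.cos_nonpos_of_pi_div_two_le_of_le (x := θ) (by linarith) (by linarith)
              linarith
            have hm := hθ₃mem.2 he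
            rcases lt_trichotomy θ θ₃ with h | h | h
            · exact absurd (aux3 k he hk ⟨h32, hθ2π⟩ hm h heq2 hθ₃eq) (fun a => a)
            · exact h
            · exact absurd (aux3 k he hk hm ⟨h32, hθ2π⟩ h hθ₃eq heq2) (fun a => a)
          · -- k odd: contradiction
            exfalso
            have hspow : Real.sin θ ^ k < 0 := ho.pow_neg hsneg
            have hcpow : 0 ≤ Real.cos θ ^ (k + 1) := (ho.add_one).pow_nonneg _
            have : (k + 1 : ℝ) * Real.sin θ ^ k < 0 :=
              mul_neg_of_pos_of_neg (by positivity) hspow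
            linarith
    · rintro (rfl | rfl | rfl | rfl)
      · exact ⟨⟨le_refl 0, by linarith⟩, by simp⟩
      · exact ⟨⟨hpi.le, by linarith⟩, by simp⟩
      · refine ⟨⟨hθ₁mem.1.le, by linarith [hθ₁mem.2]⟩, ?_⟩
        rw [hθ₁eq]; ring
      · refine ⟨⟨by linarith [hθ₃facts.1], hθ₃facts.2.2⟩, ?_⟩
        rw [hθ₃eq]; ring
  · -- cardinality
    have h1 : θ₁ < π / 2 := hθ₁mem.2
    have h2 : 0 < θ₁ := hθ₁mem.1
    obtain ⟨h3, h4, h5⟩ := hθ₃facts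
    rw [Set.ncard_insert_of_notMem (by
        simp only [Set.mem_insert_iff, Set.mem_singleton_iff]
        push_neg
        exact ⟨by linarith, by linarith, by linarith⟩),
      Set.ncard_insert_of_notMem (by
        simp only [Set.mem_insert_iff, Set.mem_singleton_iff]
        push_neg
        exact ⟨by linarith, fun h => h4 h.symm⟩),
      Set.ncard_insert_of_notMem (by
        simp only [Set.mem_singleton_iff]
        intro h; rw [h] at h1; linarith),
      Set.ncard_singleton]
end

section
/- The set of solutions θ ∈ [0, 2π) of the equation sin(θ)·(cos(θ)⁴ + cos(θ)²·sin(θ) − 2·sin(θ)²) = 0 is exactly the six-element set {0, arcsin((√5 − 1)/2), π − arcsin((√5 − 1)/2), π, π − arcsin(1 − √2), 2π + arcsin(1 − √2)}. -/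
open Real

private lemma factor_eq (θ : ℝ) :
    Real.sin θ * (Real.cos θ ^ 4 + Real.cos θ ^ 2 * Real.sin θ - 2 * Real.sin θ ^ 2) =
      Real.sin θ * (Real.sin θ ^ 2 + Real.sin θ - 1) * (Real.sin θ ^ 2 - 2 * Real.sin θ - 1) := by
  have h := Real.sin_sq_add_cos_sq θ
  linear_combination (Real.sin θ * (Real.cos θ ^ 2 + 1 - Real.sin θ ^ 2 + Real.sin θ)) * h

private lemma pos_case {θ s : ℝ} (h0 : 0 ≤ θ) (h2 : θ < 2 * π) (hs : Real.sin θ = s)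
    (hpos : 0 < s) : θ = Real.arcsin s ∨ θ = π - Real.arcsin s := by
  have hpi := Real.pi_pos
  have hlt : θ < π := by
    by_contra h
    push_neg at h
    have h1 : Real.sin (θ - π) = -Real.sin θ := Real.sin_sub_pi θ
    have h2' : 0 ≤ Real.sin (θ - π) :=
      Real.sin_nonneg_of_nonneg_of_le_pi (by linarith) (by linarith)
    rw [h1, hs] at h2'
    linarith
  rcases le_or_gt θ (π / 2) with h | h
  · left
    rw [← hs, Real.arcsin_sin (by linarith) h]
  · right
    have : Real.arcsin (Real.sin (π - θ)) = π - θ :=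
      Real.arcsin_sin (by linarith) (by linarith)
    rw [Real.sin_pi_sub, hs] at this
    linarith [this]

private lemma neg_case {θ s : ℝ} (h0 : 0 ≤ θ) (h2 : θ < 2 * π) (hs : Real.sin θ = s)
    (hneg : s < 0) : θ = π - Real.arcsin s ∨ θ = 2 * π + Real.arcsin s := by
  have hpi := Real.pi_pos
  have hgt : π < θ := by
    by_contra h
    push_neg at h
    have := Real.sin_nonneg_of_nonneg_of_le_pi h0 h
    rw [hs] at this; linarith
  have hsin : Real.sin (θ - π) = -s := by rw [Real.sin_sub_pi, hs]
  have := pos_case (θ := θ - π) (s := -s) (by linarith) (by linarith) hsin (by linarith)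
  rw [Real.arcsin_neg] at this
  rcases this with h | h
  · left; linarith
  · right; linarith

private lemma zero_case {θ : ℝ} (h0 : 0 ≤ θ) (h2 : θ < 2 * π) (hs : Real.sin θ = 0) :
    θ = 0 ∨ θ = π := by
  have hpi := Real.pi_pos
  obtain ⟨n, hn⟩ := Real.sin_eq_zero_iff.mp hs
  have hn0 : 0 ≤ n := by
    by_contra h
    push_neg at h
    have : (n : ℝ) ≤ -1 := by exact_mod_cast Int.le_sub_one_of_lt h
    nlinarith
  have hn2 : n < 2 := by
    by_contra h
    push_neg at h
    have : (2 : ℝ) ≤ (n : ℝ) := by exact_mod_cast h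
    nlinarith
  interval_cases n
  · left; simpa using hn.symm
  · right; simp at hn; linarith

set_option maxHeartbeats 1000000 in
/-- The solutions `θ ∈ [0, 2π)` of
`sin(θ)·(cos⁴(θ) + cos²(θ)·sin(θ) − 2·sin²(θ)) = 0` form exactly the six-element set
`{0, arcsin((√5−1)/2), π − arcsin((√5−1)/2), π, π − arcsin(1−√2), 2π + arcsin(1−√2)}`. -/
theorem blowup_equilibria_n2_k1 :
    {θ : ℝ | θ ∈ Set.Ico 0 (2 * π) ∧
        Real.sin θ * (Real.cos θ ^ 4 + Real.cos θ ^ 2 * Real.sin θ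
          - 2 * Real.sin θ ^ 2) = 0} =
      {0, Real.arcsin ((Real.sqrt 5 - 1) / 2), π - Real.arcsin ((Real.sqrt 5 - 1) / 2),
        π, π - Real.arcsin (1 - Real.sqrt 2), 2 * π + Real.arcsin (1 - Real.sqrt 2)} ∧
    ({0, Real.arcsin ((Real.sqrt 5 - 1) / 2), π - Real.arcsin ((Real.sqrt 5 - 1) / 2),
        π, π - Real.arcsin (1 - Real.sqrt 2), 2 * π + Real.arcsin (1 - Real.sqrt 2)} :
      Set ℝ).ncard = 6 := by
  have hpi := Real.pi_pos
  set a : ℝ := (Real.sqrt 5 - 1) / 2 with ha_def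
  set b : ℝ := 1 - Real.sqrt 2 with hb_def
  have h5 : Real.sqrt 5 ^ 2 = 5 := Real.sq_sqrt (by norm_num)
  have h2 : Real.sqrt 2 ^ 2 = 2 := Real.sq_sqrt (by norm_num)
  have h5lb : 2 < Real.sqrt 5 := by nlinarith [Real.sqrt_nonneg 5]
  have h5ub : Real.sqrt 5 < 3 := by nlinarith [Real.sqrt_nonneg 5]
  have h2lb : 1 < Real.sqrt 2 := by nlinarith [Real.sqrt_nonneg 2]
  have h2ub : Real.sqrt 2 < 2 := by nlinarith [Real.sqrt_nonneg 2]
  have ha0 : 0 < a := by rw [ha_def]; linarith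
  have ha1 : a < 1 := by rw [ha_def]; linarith
  have hb0 : b < 0 := by rw [hb_def]; linarith
  have hb1 : -1 < b := by rw [hb_def]; linarith
  -- root facts
  have haroot : a ^ 2 + a - 1 = 0 := by rw [ha_def]; nlinarith
  have hbroot : b ^ 2 - 2 * b - 1 = 0 := by rw [hb_def]; nlinarith
  -- arcsin bounds
  have hAa : 0 < Real.arcsin a := Real.arcsin_pos.mpr ha0
  have hAa2 : Real.arcsin a < π / 2 := Real.arcsin_lt_pi_div_two.mpr ha1
  have hAb : Real.arcsin b < 0 := Real.arcsin_lt_zero.mpr hb0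
  have hAb2 : -(π / 2) < Real.arcsin b := Real.neg_pi_div_two_lt_arcsin.mpr hb1
  have hsina : Real.sin (Real.arcsin a) = a := Real.sin_arcsin (by linarith) (by linarith)
  have hsinb : Real.sin (Real.arcsin b) = b := Real.sin_arcsin (by linarith) (by linarith)
  constructor
  · ext θ
    simp only [Set.mem_setOf_eq, Set.mem_Ico, Set.mem_insert_iff, Set.mem_singleton_iff]
    constructor
    · rintro ⟨⟨h0, h2π⟩, heq⟩
      rw [factor_eq] at heq
      rcases mul_eq_zero.mp heq with heq | hc
      · rcases mul_eq_zero.mp heq with hz | hA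
        · rcases zero_case h0 h2π hz with h | h
          · exact Or.inl h
          · exact Or.inr (Or.inr (Or.inr (Or.inl h)))
        · -- sin θ ^ 2 + sin θ - 1 = 0, so sin θ = a
          have hs2 : Real.sin θ = a := by
            have hge : -1 ≤ Real.sin θ := Real.neg_one_le_sin θ
            have : (Real.sin θ - a) * (Real.sin θ + a + 1) = 0 := by nlinarith
            rcases mul_eq_zero.mp this with h | h
            · linarith
            · nlinarith
          rcases pos_case h0 h2π hs2 ha0 with h | h
          · exact Or.inr (Or.inl h)
          · exact Or.inr (Or.inr (Or.inl h))
      · -- sin θ ^ 2 - 2 sin θ - 1 = 0, so sin θ = b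
        have hs2 : Real.sin θ = b := by
          have hle : Real.sin θ ≤ 1 := Real.sin_le_one θ
          have : (Real.sin θ - b) * (Real.sin θ - (1 + Real.sqrt 2)) = 0 := by nlinarith
          rcases mul_eq_zero.mp this with h | h
          · linarith
          · nlinarith
        rcases neg_case h0 h2π hs2 hb0 with h | h
        · exact Or.inr (Or.inr (Or.inr (Or.inr (Or.inl h))))
        · exact Or.inr (Or.inr (Or.inr (Or.inr (Or.inr h))))
    · intro h
      rcases h with h | h | h | h | h | h <;> subst h
      · refine ⟨⟨le_refl 0, by linarith⟩, by simp⟩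
      · refine ⟨⟨by linarith, by linarith⟩, ?_⟩
        rw [factor_eq, hsina, haroot]
        ring
      · refine ⟨⟨by linarith, by linarith⟩, ?_⟩
        rw [factor_eq, Real.sin_pi_sub, hsina, haroot]
        ring
      · refine ⟨⟨by linarith, by linarith⟩, by simp⟩
      · refine ⟨⟨by linarith, by linarith⟩, ?_⟩
        rw [factor_eq, Real.sin_pi_sub, hsinb, hbroot]
        ring
      · refine ⟨⟨by linarith, by linarith⟩, ?_⟩
        have : Real.sin (2 * π + Real.arcsin b) = b := by
          rw [add_comm, Real.sin_add_two_pi, hsinb]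
        rw [factor_eq, this, hbroot]
        ring
  · -- cardinality
    have o1 : (0 : ℝ) < Real.arcsin a := hAa
    have o2 : Real.arcsin a < π - Real.arcsin a := by linarith
    have o3 : π - Real.arcsin a < π := by linarith
    have o4 : π < π - Real.arcsin b := by linarith
    have o5 : π - Real.arcsin b < 2 * π + Real.arcsin b := by linarith
    have o6 : π < 2 * π + Real.arcsin b := by linarith
    have m4 : π - Real.arcsin b ∉ ({2 * π + Real.arcsin b} : Set ℝ) := by
      simp only [Set.mem_singleton_iff]
      exact ne_of_lt o5
    have m3 : π ∉ ({π - Real.arcsin b, 2 * π + Real.arcsin b} : Set ℝ) := by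
      simp only [Set.mem_insert_iff, Set.mem_singleton_iff]
      push_neg
      exact ⟨ne_of_lt o4, ne_of_lt o6⟩
    have m2 : π - Real.arcsin a ∉
        ({π, π - Real.arcsin b, 2 * π + Real.arcsin b} : Set ℝ) := by
      simp only [Set.mem_insert_iff, Set.mem_singleton_iff]
      push_neg
      exact ⟨ne_of_lt o3, ne_of_lt (by linarith), ne_of_lt (by linarith)⟩
    have m1 : Real.arcsin a ∉
        ({π - Real.arcsin a, π, π - Real.arcsin b, 2 * π + Real.arcsin b} : Set ℝ) := by
      simp only [Set.mem_insert_iff, Set.mem_singleton_iff]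
      push_neg
      exact ⟨ne_of_lt o2, ne_of_lt (by linarith), ne_of_lt (by linarith),
        ne_of_lt (by linarith)⟩
    have m0 : (0 : ℝ) ∉ ({Real.arcsin a, π - Real.arcsin a, π, π - Real.arcsin b,
        2 * π + Real.arcsin b} : Set ℝ) := by
      simp only [Set.mem_insert_iff, Set.mem_singleton_iff]
      push_neg
      exact ⟨ne_of_lt o1, ne_of_lt (by linarith), ne_of_lt (by linarith),
        ne_of_lt (by linarith), ne_of_lt (by linarith)⟩
    rw [Set.ncard_insert_of_notMem m0 (Set.toFinite _),
      Set.ncard_insert_of_notMem m1 (Set.toFinite _),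
      Set.ncard_insert_of_notMem m2 (Set.toFinite _),
      Set.ncard_insert_of_notMem m3 (Set.toFinite _),
      Set.ncard_insert_of_notMem m4 (Set.toFinite _),
      Set.ncard_singleton]
end
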